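/- Let d ≥ 1, ω : Fin d → ℝ injective, and let L be a real d×d matrix with L_{x'|x} ≥ 0 for x' ≠ x and Σ_{x'} L_{x'|x} = 0 for every x. Let θ_{xy} (x,y ∈ Fin d) be complex numbers with |θ_{xy}| = 1, θ_{yx} = θ_{xy}*, θ_{xx} = 1, satisfying the Markovian phase-matching condition θ_{x'y'}θ_{xy}* = θ_{x'x}θ_{y'y}* for all x,y,x',y' with ω_{x'} − ω_{y'} = ω_x − ω_y. Define A^{x'|x}_{y'|y} := θ_{x'x} θ_{y'y}* √(L_{x'|x} L_{y'|y}) whenever ω_{x'} − ω_x = ω_{y'} − ω_y and x' ≠ x, and A^{x'|x}_{y'|y} := 0 otherwise. Then: (i) the Choi-type matrix J_{(x',x),(y',y)} := A^{x'|x}_{y'|y} is positive semidefinite and vanishes off the mode structure (A^{x'|x}_{y'|y} = 0 unless ω_{x'} − ω_x = ω_{y'} − ω_y); and (ii) if ρ̃ : ℝ → (Fin d × Fin d → ℝ) is differentiable with dρ̃_{x'y'}/dt = −γ_{x'y'} ρ̃_{x'y'} + Σ_{(x,y): ω_x−ω_y = ω_{x'}−ω_{y'}, x ≠ x', y ≠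 y'} √(L_{x'|x} L_{y'|y}) ρ̃_{xy} (where γ_{x'y'} := (|L_{x'|x'}| + |L_{y'|y'}|)/2), with ρ̃_{x'y'}(0) ≥ 0 for all x',y', then the matrix-valued function ρ(t) defined entrywise by ρ_{x'y'}(t) := θ_{x'y'} ρ̃_{x'y'}(t) satisfies the covariant Lindblad equation dρ_{x'y'}/dt = Σ_{(x,y): ω_x−ω_y = ω_{x'}−ω_{y'}} [A^{x'|x}_{y'|y} − (1/2)Σ_z (A_{z|x}+A_{z|y}) δ_{x x'}δ_{y y'}] ρ_{xy}, and |ρ_{x'y'}(t)| = ρ̃_{x'y'}(t) for all t ≥ 0; in particular the bound of the minimal decoherence theorem is attained. (Tightness of Theorem 1.) -/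

import Mathlib

open Matrix Finset
open scoped ComplexOrder

section MDTaux

attribute [local instance] Matrix.linftyOpNormedRing Matrix.linftyOpNormedAlgebra

variable {n : Type*} [Fintype n] [DecidableEq n]

private lemma MDT_pow_entry_nonneg {N : Matrix n n ℝ} (hN : ∀ q p, 0 ≤ N q p) :
    ∀ k q p, 0 ≤ (N ^ k) q p := by
  intro k
  induction k with
  | zero => intro q p; by_cases h : q = p <;> simp [pow_zero, Matrix.one_apply, h]
  | succ k ih =>
    intro q p
    rw [pow_succ, Matrix.mul_apply]
    exact Finset.sum_nonneg fun z _ => mul_nonneg (ih q z) (hN z p)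

private lemma MDT_exp_entry_nonneg {N : Matrix n n ℝ} (hN : ∀ q p, 0 ≤ N q p) (q p : n) :
    0 ≤ NormedSpace.exp N q p := by
  classical
  let φ₀ : Matrix n n ℝ →ₗ[ℝ] ℝ :=
    { toFun := fun X => X q p
      map_add' := fun X Y => rfl
      map_smul' := fun c X => rfl }
  let φ : Matrix n n ℝ →L[ℝ] ℝ := LinearMap.toContinuousLinearMap φ₀
  have hsum : Summable fun k : ℕ => (Nat.factorial k : ℝ)⁻¹ • N ^ k :=
    NormedSpace.expSeries_summable' (𝕂 := ℝ) N
  have h1 : NormedSpace.exp N q p = φ (NormedSpace.exp N) := rfl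
  rw [h1, NormedSpace.exp_eq_tsum ℝ, φ.map_tsum hsum]
  refine tsum_nonneg fun k => ?_
  have : φ ((Nat.factorial k : ℝ)⁻¹ • N ^ k) = (Nat.factorial k : ℝ)⁻¹ * (N ^ k) q p := rfl
  rw [this]
  exact mul_nonneg (by positivity) (MDT_pow_entry_nonneg hN k q p)

private lemma MDT_exp_smul_entry_nonneg {M : Matrix n n ℝ} (hM : ∀ q p, q ≠ p → 0 ≤ M q p)
    {t : ℝ} (ht : 0 ≤ t) (q p : n) :
    0 ≤ NormedSpace.exp (t • M) q p := by
  classical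
  set c : ℝ := ∑ i, |M i i| with hc
  have hcn : ∀ i, -M i i ≤ c := fun i =>
    le_trans (neg_le_abs _)
      (Finset.single_le_sum (f := fun i => |M i i|) (fun _ _ => abs_nonneg _) (mem_univ i))
  have hN : ∀ a b, 0 ≤ (t • (M + c • (1 : Matrix n n ℝ))) a b := by
    intro a b
    by_cases h : a = b
    · subst h
      have : (M + c • (1 : Matrix n n ℝ)) a a = M a a + c := by
        simp [Matrix.add_apply, Matrix.smul_apply, Matrix.one_apply]
      simp only [Matrix.smul_apply, this, smul_eq_mul]
      exact mul_nonneg ht (by linarith [hcn a])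
    · have : (M + c • (1 : Matrix n n ℝ)) a b = M a b := by
        simp [Matrix.add_apply, Matrix.smul_apply, Matrix.one_apply, h]
      simp only [Matrix.smul_apply, this, smul_eq_mul]
      exact mul_nonneg ht (hM a b h)
  have key : t • M = t • (M + c • (1 : Matrix n n ℝ)) + (-(t * c)) • (1 : Matrix n n ℝ) := by
    module
  have hcomm : Commute (t • (M + c • (1 : Matrix n n ℝ)))
      ((-(t * c)) • (1 : Matrix n n ℝ)) := by
    refine (Commute.one_right _).smul_right _ |>.smul_left _ |>.symm.symm
  rw [key]
  erw [NormedSpace.exp_add_of_commute hcomm]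
  have hdiag : NormedSpace.exp ((-(t * c)) • (1 : Matrix n n ℝ))
      = Matrix.diagonal (fun _ => Real.exp (-(t * c))) := by
    have hpi : (NormedSpace.exp (fun _ : n => -(t * c))) = fun _ : n => Real.exp (-(t * c)) := by
      funext i
      rw [Pi.coe_exp, ← Real.exp_eq_exp_ℝ]
    rw [Matrix.smul_one_eq_diagonal, Matrix.exp_diagonal, hpi]
  erw [hdiag, Matrix.mul_apply]
  refine Finset.sum_nonneg fun z _ => ?_
  rcases eq_or_ne z p with h | h
  · subst h
    simp only [Matrix.diagonal_apply_eq]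
    exact mul_nonneg (MDT_exp_entry_nonneg hN q z) (Real.exp_nonneg _)
  · simp [Matrix.diagonal_apply_ne _ h]

private lemma MDT_nonneg_of_metzler_ode (M : Matrix n n ℝ)
    (hM : ∀ q p, q ≠ p → 0 ≤ M q p)
    (f : ℝ → n → ℝ) (hf : ∀ t, HasDerivAt f (M.mulVec (f t)) t)
    (h0 : ∀ q, 0 ≤ f 0 q) : ∀ t, 0 ≤ t → ∀ q, 0 ≤ f t q := by
  classical
  intro T hT q
  set v0 : n → ℝ := f 0 with hv0
  let φ₀ : Matrix n n ℝ →ₗ[ℝ] (n → ℝ) :=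
    { toFun := fun X => X.mulVec v0
      map_add' := fun X Y => Matrix.add_mulVec X Y v0
      map_smul' := fun c X => Matrix.smul_mulVec c X v0 }
  let φ : Matrix n n ℝ →L[ℝ] (n → ℝ) := LinearMap.toContinuousLinearMap φ₀
  set g : ℝ → n → ℝ := fun s => (NormedSpace.exp (s • M)).mulVec v0 with hg
  have hg' : ∀ s : ℝ, HasDerivAt g (M.mulVec (g s)) s := by
    intro s
    have hE : HasDerivAt (fun u : ℝ => NormedSpace.exp (u • M))
        (M * NormedSpace.exp (s • M)) s := hasDerivAt_exp_smul_const' M s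
    have := (φ.hasFDerivAt (x := NormedSpace.exp (s • M))).comp_hasDerivAt s hE
    have h2 : φ (M * NormedSpace.exp (s • M)) = M.mulVec (g s) := by
      show (M * NormedSpace.exp (s • M)).mulVec v0 = _
      rw [← Matrix.mulVec_mulVec]
    exact h2 ▸ this
  let ψ : (n → ℝ) →L[ℝ] (n → ℝ) := LinearMap.toContinuousLinearMap (Matrix.mulVecLin M)
  have hlip : ∀ t : ℝ, LipschitzOnWith ‖ψ‖₊ (fun x : n → ℝ => M.mulVec x) Set.univ := by
    intro t
    exact ψ.lipschitz.lipschitzOnWith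
  have huniq : Set.EqOn f g (Set.Icc 0 T) := by
    refine ODE_solution_unique_of_mem_Icc_right
      (v := fun _ x => M.mulVec x) (s := fun _ => Set.univ) (K := ‖ψ‖₊)
      (fun t _ => hlip t) ?_ ?_ (fun _ _ => trivial) ?_ ?_ (fun _ _ => trivial)
      (by simp [hg, NormedSpace.exp_zero, Matrix.one_mulVec, hv0])
    · exact (continuous_iff_continuousAt.2 fun s => (hf s).continuousAt).continuousOn
    · exact fun s _ => (hf s).hasDerivWithinAt
    · exact (continuous_iff_continuousAt.2 fun s => (hg' s).continuousAt).continuousOn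
    · exact fun s _ => (hg' s).hasDerivWithinAt
  have hfg : f T = g T := huniq ⟨hT, le_refl T⟩
  rw [hfg]
  show 0 ≤ ((NormedSpace.exp (T • M)).mulVec v0) q
  rw [Matrix.mulVec, dotProduct]
  exact Finset.sum_nonneg fun p _ =>
    mul_nonneg (MDT_exp_smul_entry_nonneg hM hT q p) (h0 p)

end MDTaux

/-- **Tightness of the minimal decoherence theorem (Theorem 1).** Given a population
transfer rate matrix `L` and phases `θ` satisfying the Markovian phase-matching condition,
the generator built from `A^{x'|x}_{y'|y} = θ_{x'x} θ*_{y'y} √(L_{x'|x}L_{y'|y})` is a valid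
covariant generator (positive semidefinite Choi-type matrix, mode structure), and the state
`ρ_{x'y'}(t) = θ_{x'y'} ρ̃_{x'y'}(t)` built from the optimal solution `ρ̃` satisfies the
covariant Lindblad equation while attaining `|ρ_{x'y'}(t)| = ρ̃_{x'y'}(t)`. -/
theorem minimal_decoherence_tight
    (d : ℕ) (hd : 1 ≤ d) (ω : Fin d → ℝ) (hω : Function.Injective ω)
    (L : Fin d → Fin d → ℝ)
    (hLoff : ∀ x' x, x' ≠ x → 0 ≤ L x' x)
    (hLcol : ∀ x, ∑ x', L x' x = 0)
    (θ : Fin d → Fin d → ℂ)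
    (hθabs : ∀ x y, ‖θ x y‖ = 1)
    (hθsym : ∀ x y, θ y x = star (θ x y))
    (hθdiag : ∀ x, θ x x = 1)
    (hpm : ∀ x' y' x y, ω x' - ω y' = ω x - ω y →
      θ x' y' * star (θ x y) = θ x' x * star (θ y' y))
    (A : Fin d → Fin d → Fin d → Fin d → ℂ)
    (hA : ∀ x' x y' y, A x' x y' y =
      if ω x' - ω x = ω y' - ω y ∧ x' ≠ x then
        θ x' x * star (θ y' y) * (Real.sqrt (L x' x * L y' y) : ℂ)
      else 0)
    (γ : Fin d → Fin d → ℝ)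
    (hγ : ∀ x' y', γ x' y' = (|L x' x'| + |L y' y'|) / 2)
    (J : Matrix (Fin d × Fin d) (Fin d × Fin d) ℂ)
    (hJ : ∀ x' x y' y, J (x', x) (y', y) = A x' x y' y) :
    J.PosSemidef ∧
    (∀ x' x y' y, ω x' - ω x ≠ ω y' - ω y → A x' x y' y = 0) ∧
    (∀ ρt : ℝ → Fin d × Fin d → ℝ,
      (∀ t x' y', HasDerivAt (fun s => ρt s (x', y'))
        (-γ x' y' * ρt t (x', y')
          + ∑ p ∈ Finset.univ.filter
              (fun p : Fin d × Fin d =>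
                ω p.1 - ω p.2 = ω x' - ω y' ∧ p.1 ≠ x' ∧ p.2 ≠ y'),
            Real.sqrt (L x' p.1 * L y' p.2) * ρt t p) t) →
      (∀ x' y', 0 ≤ ρt 0 (x', y')) →
      ∀ ρ : ℝ → Matrix (Fin d) (Fin d) ℂ,
        (∀ t x' y', ρ t x' y' = θ x' y' * (ρt t (x', y') : ℂ)) →
        ((∀ t x' y', HasDerivAt (fun s => ρ s x' y')
            (∑ p ∈ Finset.univ.filter
                (fun p : Fin d × Fin d => ω p.1 - ω p.2 = ω x' - ω y'),
              (A x' p.1 y' p.2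
                - (1 / 2) * (∑ z, (A z p.1 z p.1 + A z p.2 z p.2))
                  * (if p.1 = x' ∧ p.2 = y' then 1 else 0)) * ρ t p.1 p.2) t) ∧
          (∀ t ≥ (0 : ℝ), ∀ x' y', ‖ρ t x' y'‖ = ρt t (x', y')))) := by
  classical
  -- basic facts about the phases
  have hθunit : ∀ x y, θ x y * star (θ x y) = 1 := by
    intro x y
    rw [Complex.star_def, Complex.mul_conj, Complex.normSq_eq_norm_sq, hθabs]
    norm_num
  have hθunit' : ∀ x y, star (θ x y) * θ x y = 1 := fun x y => by
    rw [mul_comm]; exact hθunit x y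
  -- the diagonal of L is nonpositive
  have hLdiag : ∀ x, L x x ≤ 0 := by
    intro x
    have h := hLcol x
    rw [Fintype.sum_eq_add_sum_compl x] at h
    have h2 : 0 ≤ ∑ z ∈ ({x}ᶜ : Finset (Fin d)), L z x :=
      Finset.sum_nonneg fun z hz =>
        hLoff z x (by simpa [Finset.mem_compl] using hz)
    linarith
  -- the diagonal sums of A
  have hsumA : ∀ x, ∑ z, A z x z x = ((-L x x : ℝ) : ℂ) := by
    intro x
    have h1 : ∀ z, A z x z x = ((if z ≠ x then L z x else 0 : ℝ) : ℂ) := by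
      intro z
      rw [hA]
      by_cases hz : z = x
      · subst hz; simp
      · rw [if_pos ⟨rfl, hz⟩, if_pos hz,
          Real.sqrt_mul_self (hLoff z x hz), hθunit]
        ring
    rw [Finset.sum_congr rfl fun z _ => h1 z, ← Complex.ofReal_sum]
    congr 1
    rw [Fintype.sum_eq_add_sum_compl x]
    simp only [ne_eq, not_true_eq_false, if_false, ite_not, zero_add]
    have h := hLcol x
    rw [Fintype.sum_eq_add_sum_compl x] at h
    have : ∑ z ∈ ({x}ᶜ : Finset (Fin d)), (if z = x then 0 else L z x)
        = ∑ z ∈ ({x}ᶜ : Finset (Fin d)), L z x := by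
      refine Finset.sum_congr rfl fun z hz => ?_
      rw [if_neg (by simpa [Finset.mem_compl] using hz)]
    rw [this]
    linarith
  -- mode function and amplitude function for the PSD part
  set m : Fin d × Fin d → ℝ := fun q => ω q.1 - ω q.2 with hm
  set g : Fin d × Fin d → ℂ :=
    fun q => if q.1 ≠ q.2 then θ q.1 q.2 * (Real.sqrt (L q.1 q.2) : ℂ) else 0 with hgdef
  have hJg : ∀ q p : Fin d × Fin d, J q p = if m q = m p then g q * star (g p) else 0 := by
    rintro ⟨x', x⟩ ⟨y', y⟩
    rw [hJ, hA]
    by_cases hmode : ω x' - ω x = ω y' - ω y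
    · by_cases hxx : x' = x
      · subst hxx
        have hyy : y' = y := hω (by linarith [hmode] : ω y' = ω y)
        subst hyy
        simp [hgdef, hmode]
      · have hyy : y' ≠ y := by
          intro h; subst h
          exact hxx (hω (by linarith [hmode] : ω x' = ω x))
        rw [if_pos ⟨hmode, hxx⟩, if_pos hmode]
        simp only [hgdef, ne_eq, hxx, not_false_eq_true, if_pos, hyy]
        rw [star_mul', Complex.star_def, Complex.conj_ofReal,
          Real.sqrt_mul (hLoff x' x hxx)]
        push_cast
        ring
    · rw [if_neg (by tauto), if_neg hmode]
  have hJherm : J.IsHermitian := by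
    apply Matrix.IsHermitian.ext
    intro q p
    rw [hJg, hJg]
    by_cases h : m p = m q
    · rw [if_pos h, if_pos h.symm, star_mul', star_star]; ring
    · rw [if_neg h, if_neg fun hh => h hh.symm, star_zero]
  have hJpsd : J.PosSemidef := by
    refine Matrix.PosSemidef.of_dotProduct_mulVec_nonneg hJherm fun v => ?_
    set c : Fin d × Fin d → ℂ := fun q => star (v q) * g q with hcdef
    set S : ℝ → ℂ := fun w => ∑ p ∈ Finset.univ.filter (fun p => m p = w), c p with hSdef
    have hquad : star v ⬝ᵥ J.mulVec v = ∑ q, c q * star (S (m q)) := by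
      rw [dotProduct]
      refine Finset.sum_congr rfl fun q _ => ?_
      rw [Matrix.mulVec, dotProduct, Finset.mul_sum, hSdef]
      simp only [Finset.sum_filter, star_sum, Finset.mul_sum]
      refine Finset.sum_congr rfl fun p _ => ?_
      rw [hJg]
      by_cases h : m q = m p
      · rw [if_pos h, if_pos h.symm, hcdef]
        simp only [Pi.star_apply, star_mul', star_star]
        ring
      · rw [if_neg h, if_neg fun hh => h hh.symm, star_zero]
        ring
    rw [hquad]
    have hfib : ∑ q, c q * star (S (m q))
        = ∑ w ∈ Finset.univ.image m, ∑ q ∈ Finset.univ.filter (fun q => m q = w),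
            c q * star (S (m q)) := by
      exact (Finset.sum_fiberwise_of_maps_to (fun q _ => Finset.mem_image_of_mem m (mem_univ q))
        (fun q => c q * star (S (m q)))).symm
    rw [hfib]
    refine Finset.sum_nonneg fun w _ => ?_
    have h1 : ∑ q ∈ Finset.univ.filter (fun q => m q = w), c q * star (S (m q))
        = ∑ q ∈ Finset.univ.filter (fun q => m q = w), c q * star (S w) :=
      Finset.sum_congr rfl fun q hq => by rw [(Finset.mem_filter.1 hq).2]
    have h2 : ∑ q ∈ Finset.univ.filter (fun q => m q = w), c q = S w := rfl
    rw [h1, ← Finset.sum_mul, h2]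
    exact mul_star_self_nonneg _
  refine ⟨hJpsd, ?_, ?_⟩
  · intro x' x y' y hmode
    rw [hA, if_neg (by tauto)]
  · intro ρt hode h0 ρ hρ
    -- the Metzler matrix generating the ρ̃ ODE
    set M : Matrix (Fin d × Fin d) (Fin d × Fin d) ℝ := fun q p =>
      if p = q then -γ q.1 q.2
      else if ω p.1 - ω p.2 = ω q.1 - ω q.2 ∧ p.1 ≠ q.1 ∧ p.2 ≠ q.2 then
        Real.sqrt (L q.1 p.1 * L q.2 p.2) else 0 with hMdef
    have hMetz : ∀ q p, q ≠ p → 0 ≤ M q p := by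
      intro q p hqp
      rw [hMdef]
      simp only
      rw [if_neg (fun h => hqp h.symm)]
      split
      · exact Real.sqrt_nonneg _
      · exact le_refl 0
    have hmulVec : ∀ t (q : Fin d × Fin d), (M.mulVec (ρt t)) q =
        -γ q.1 q.2 * ρt t q + ∑ p ∈ Finset.univ.filter
          (fun p : Fin d × Fin d => ω p.1 - ω p.2 = ω q.1 - ω q.2 ∧ p.1 ≠ q.1 ∧ p.2 ≠ q.2),
          Real.sqrt (L q.1 p.1 * L q.2 p.2) * ρt t p := by
      intro t q
      rw [Matrix.mulVec, dotProduct, Fintype.sum_eq_add_sum_compl q]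
      congr 1
      · rw [hMdef]; simp
      · have e1 : ∀ p ∈ ({q}ᶜ : Finset (Fin d × Fin d)), M q p * ρt t p
            = (if ω p.1 - ω p.2 = ω q.1 - ω q.2 ∧ p.1 ≠ q.1 ∧ p.2 ≠ q.2 then
                Real.sqrt (L q.1 p.1 * L q.2 p.2) * ρt t p else 0) := by
          intro p hp
          have hpq : p ≠ q := by simpa [Finset.mem_compl] using hp
          rw [hMdef]
          simp only
          rw [if_neg hpq, ite_mul, zero_mul]
        rw [Finset.sum_congr rfl e1]
        have e2 : ∑ p ∈ ({q}ᶜ : Finset (Fin d × Fin d)),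
            (if ω p.1 - ω p.2 = ω q.1 - ω q.2 ∧ p.1 ≠ q.1 ∧ p.2 ≠ q.2 then
              Real.sqrt (L q.1 p.1 * L q.2 p.2) * ρt t p else 0)
            = ∑ p : Fin d × Fin d,
            (if ω p.1 - ω p.2 = ω q.1 - ω q.2 ∧ p.1 ≠ q.1 ∧ p.2 ≠ q.2 then
              Real.sqrt (L q.1 p.1 * L q.2 p.2) * ρt t p else 0) := by
          rw [Fintype.sum_eq_add_sum_compl q, if_neg (by tauto), zero_add]
        rw [e2, ← Finset.sum_filter]
    have hfODE : ∀ t, HasDerivAt ρt (M.mulVec (ρt t)) t := by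
      intro t
      refine hasDerivAt_pi.2 fun q => ?_
      rw [hmulVec t q]
      exact hode t q.1 q.2
    have hnn : ∀ t, 0 ≤ t → ∀ q : Fin d × Fin d, 0 ≤ ρt t q :=
      MDT_nonneg_of_metzler_ode M hMetz ρt hfODE (fun q => h0 q.1 q.2)
    constructor
    · intro t x' y'
      have hfun : (fun s => ρ s x' y') = fun s => θ x' y' * ((ρt s (x', y') : ℝ) : ℂ) :=
        funext fun s => hρ s x' y'
      have hder := ((hode t x' y').ofReal_comp).const_mul (θ x' y')
      rw [hfun]
      refine hder.congr_deriv ?_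
      symm
      set S : Finset (Fin d × Fin d) :=
        Finset.univ.filter (fun p : Fin d × Fin d => ω p.1 - ω p.2 = ω x' - ω y') with hSdef2
      have hmemS : (x', y') ∈ S := by simp [hSdef2]
      rw [← Finset.add_sum_erase _ _ hmemS]
      have hhead : (A x' x' y' y'
          - 1 / 2 * (∑ z, (A z x' z x' + A z y' z y')) * (if x' = x' ∧ y' = y' then 1 else 0))
          * ρ t x' y' = θ x' y' * ((-γ x' y' * ρt t (x', y') : ℝ) : ℂ) := by
        rw [hA, if_neg (by tauto), Finset.sum_add_distrib, hsumA, hsumA,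
          if_pos ⟨rfl, rfl⟩, hρ, hγ]
        rw [abs_of_nonpos (hLdiag x'), abs_of_nonpos (hLdiag y')]
        push_cast
        ring
      have htail : ∀ p ∈ S.erase (x', y'),
          (A x' p.1 y' p.2 - 1 / 2 * (∑ z, (A z p.1 z p.1 + A z p.2 z p.2))
            * (if p.1 = x' ∧ p.2 = y' then 1 else 0)) * ρ t p.1 p.2
          = θ x' y' * ((Real.sqrt (L x' p.1 * L y' p.2) * ρt t p : ℝ) : ℂ) := by
        intro p hp
        obtain ⟨hpne, hpS⟩ := Finset.mem_erase.1 hp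
        have hpmode : ω p.1 - ω p.2 = ω x' - ω y' := by
          have := (Finset.mem_filter.1 hpS).2
          exact this
        have hp1 : p.1 ≠ x' := by
          intro h
          have h2 : ω p.2 = ω y' := by rw [h] at hpmode; linarith
          exact hpne (Prod.ext h (hω h2))
        have hp2 : p.2 ≠ y' := by
          intro h
          have h2 : ω p.1 = ω x' := by rw [h] at hpmode; linarith
          exact hpne (Prod.ext (hω h2) h)
        rw [if_neg (fun h => hp1 h.1), mul_zero, sub_zero,
          hA, if_pos ⟨by linarith, Ne.symm hp1⟩, hρ]
        have hkey : θ x' y' * star (θ p.1 p.2) = θ x' p.1 * star (θ y' p.2) :=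
          hpm x' y' p.1 p.2 (by linarith)
        rw [← hkey]
        have hup : star (θ p.1 p.2) * θ p.1 p.2 = 1 := hθunit' p.1 p.2
        push_cast
        linear_combination (θ x' y' * (Real.sqrt (L x' p.1 * L y' p.2) : ℂ)
          * (ρt t p : ℂ)) * hup
      rw [hhead, Finset.sum_congr rfl htail]
      have hsetseq : S.erase (x', y') = Finset.univ.filter
          (fun p : Fin d × Fin d => ω p.1 - ω p.2 = ω x' - ω y' ∧ p.1 ≠ x' ∧ p.2 ≠ y') := by
        ext p
        simp only [Finset.mem_erase, Finset.mem_filter, Finset.mem_univ, true_and, hSdef2]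
        constructor
        · rintro ⟨hne, hmode⟩
          refine ⟨hmode, ?_, ?_⟩
          · intro h
            have h2 : ω p.2 = ω y' := by rw [h] at hmode; linarith
            exact hne (Prod.ext h (hω h2))
          · intro h
            have h2 : ω p.1 = ω x' := by rw [h] at hmode; linarith
            exact hne (Prod.ext (hω h2) h)
        · rintro ⟨hmode, h1, h2⟩
          exact ⟨fun h => h1 (by rw [h]), hmode⟩
      rw [hsetseq]
      push_cast
      rw [mul_add, Finset.mul_sum]
    · intro t ht x' y'
      rw [hρ, norm_mul, hθabs, one_mul, Complex.norm_real, Real.norm_eq_abs,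
        abs_of_nonneg (hnn t ht (x', y'))]
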